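/- Truth Lemma for atomic membership: if G is P-generic over (M,𝒞) (meets every dense class in 𝒞), then σ^G ∈ τ^G holds if and only if some p ∈ G satisfies p ⊩* σ ∈ τ, assuming the truth lemma holds for equality of names of lower rank (inductive step). -/
import Mathlib


/-- Formulas of the forcing language: atomic membership and equality of names,
conjunction, negation and universal quantification over (set-)names. -/
inductive FForm (Name : Type*) : Type _
  | mem : Name → Name → FForm Name
  | eq : Name → Name → FForm Name
  | and : FForm Name → FForm Name → FForm Name
  | not : FForm Name → FForm Name
  | all : (Name → FForm Name) → FForm Name

/-- Derived biconditional of the forcing language. -/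
def FForm.iff {Name : Type*} (φ ψ : FForm Name) : FForm Name :=
  .and (.not (.and φ (.not ψ))) (.not (.and ψ (.not φ)))

/-- D is dense below p. -/
def DenseBelow {P : Type*} [Preorder P] (D : Set P) (p : P) : Prop :=
  ∀ q ≤ p, ∃ r ≤ q, r ∈ D

/-- The recursive defining clauses of the forcing relation ⊩*. -/
def ForcingEqs {P : Type*} [Preorder P] {Name : Type*}
    (elems : Name → Set (Name × P)) (forces : P → FForm Name → Prop) : Prop :=
  (∀ p σ τ, forces p (.mem σ τ) ↔
      DenseBelow {q | ∃ π r, (π, r) ∈ elems τ ∧ q ≤ r ∧ forces q (.eq π σ)} p) ∧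
  (∀ p σ τ, forces p (.eq σ τ) ↔
      ∀ π r, (π, r) ∈ elems σ ∪ elems τ →
        forces p (FForm.iff (.mem π σ) (.mem π τ))) ∧
  (∀ p φ ψ, forces p (.and φ ψ) ↔ forces p φ ∧ forces p ψ) ∧
  (∀ p φ, forces p (.not φ) ↔ ∀ q ≤ p, ¬ forces q φ) ∧
  (∀ p F, forces p (.all F) ↔ ∀ σ, forces p (F σ))

/-- Truth Lemma for atomic membership: for generic G,
σ^G ∈ τ^G iff some p ∈ G forces σ ∈ τ, assuming (inductive step) the truth lemma
for equality of names of lower rank. -/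
theorem truth_lemma_mem {P : Type*} [Preorder P] {Name : Type*}
    (elems : Name → Set (Name × P)) (forces : P → FForm Name → Prop)
    (h : ForcingEqs elems forces)
    (rank : Name → Ordinal)
    (hrank : ∀ (π : Name) (r : P) (τ : Name), (π, r) ∈ elems τ → rank π < rank τ)
    (G : Set P)
    (hup : ∀ p ∈ G, ∀ q, p ≤ q → q ∈ G)
    (hdir : ∀ p ∈ G, ∀ q ∈ G, ∃ r ∈ G, r ≤ p ∧ r ≤ q)
    (hgen : ∀ D : Set P, ∀ p ∈ G, DenseBelow D p → (G ∩ D).Nonempty)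
    (interp : Name → ZFSet)
    (hinterp : ∀ (τ : Name) (x : ZFSet), x ∈ interp τ ↔
      ∃ π r, (π, r) ∈ elems τ ∧ r ∈ G ∧ x = interp π)
    (σ τ : Name)
    (hIH : ∀ (π : Name) (r : P), (π, r) ∈ elems τ →
      (interp π = interp σ ↔ ∃ p ∈ G, forces p (.eq π σ))) :
    interp σ ∈ interp τ ↔ ∃ p ∈ G, forces p (.mem σ τ) := by
  obtain ⟨hmem, heq, hand, hnot, -⟩ := h
  -- forces · (.eq π σ) is downward closed
  have hdc : ∀ (π : Name) (p q : P), q ≤ p → forces p (.eq π σ) → forces q (.eq π σ) := by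
    intro π p q hqp hp
    rw [heq] at hp ⊢
    intro π' r hπr
    have := hp π' r hπr
    unfold FForm.iff at this ⊢
    rw [hand] at this ⊢
    rw [hnot, hnot] at this ⊢
    exact ⟨fun s hs => this.1 s (hs.trans hqp), fun s hs => this.2 s (hs.trans hqp)⟩
  constructor
  · intro hin
    obtain ⟨π, r, hπr, hrG, hσπ⟩ := (hinterp τ (interp σ)).1 hin
    obtain ⟨p, hpG, hpf⟩ := (hIH π r hπr).1 hσπ.symm
    obtain ⟨s, hsG, hsr, hsp⟩ := hdir r hrG p hpG
    refine ⟨s, hsG, (hmem s σ τ).2 ?_⟩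
    intro q hqs
    exact ⟨q, le_refl q, π, r, hπr, hqs.trans hsr, hdc π p q (hqs.trans hsp) hpf⟩
  · rintro ⟨p, hpG, hpf⟩
    rw [hmem] at hpf
    obtain ⟨q, hqG, π, r, hπr, hqr, hqeq⟩ := hgen _ p hpG hpf
    have : interp π = interp σ := (hIH π r hπr).2 ⟨q, hqG, hqeq⟩
    exact (hinterp τ (interp σ)).2 ⟨π, r, hπr, hup q hqG r hqr, this.symm⟩
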